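/- arXiv:1705.01369 — 3 statements merged into one kernel-verified Lean document; each statement's English description precedes it below -/
import Mathlib

section
/- Let a > 0 and γ > 1, and define H(s) = a/(γ-1)·s^γ for s ≥ 0. There exists δ ∈ (0, 1/2] depending only on γ such that for all ϱ, ϱ̃ ≥ 0 with ϱ ≥ δ⁻¹·ϱ̃, one has H(ϱ) − H(ϱ̃) − H'(ϱ̃)(ϱ − ϱ̃) ≥ a/(2(γ−1))·ϱ^γ. -/
/-- Lower bound on the relative entropy density `H(ϱ) − H(ϱ̃) − H'(ϱ̃)(ϱ − ϱ̃)`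
in the regime `ϱ ≥ δ⁻¹·ϱ̃`, with `H(s) = a/(γ-1)·s^γ`. -/
theorem stmt_5 (a γ : ℝ) (ha : 0 < a) (hγ : 1 < γ) :
    ∃ δ : ℝ, 0 < δ ∧ δ ≤ 1 / 2 ∧
      ∀ ϱ ϱt : ℝ, 0 ≤ ϱ → 0 ≤ ϱt → ϱ ≥ δ⁻¹ * ϱt →
        a / (γ - 1) * ϱ ^ γ - a / (γ - 1) * ϱt ^ γ
          - a * γ / (γ - 1) * ϱt ^ (γ - 1) * (ϱ - ϱt)
          ≥ a / (2 * (γ - 1)) * ϱ ^ γ := by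
  have hγ0 : (0:ℝ) < γ - 1 := by linarith
  set c : ℝ := (2 * (1 + γ))⁻¹ with hcdef
  have hc0 : 0 < c := by
    rw [hcdef]; positivity
  set δ : ℝ := min (1/2) (c ^ (γ-1)⁻¹) with hδdef
  have hδ0 : 0 < δ := lt_min (by norm_num) (Real.rpow_pos_of_pos hc0 _)
  have hδhalf : δ ≤ 1/2 := min_le_left _ _
  have hδ1 : δ ≤ 1 := hδhalf.trans (by norm_num)
  have hδpow : δ ^ (γ-1) ≤ c := by
    calc δ ^ (γ-1) ≤ (c ^ (γ-1)⁻¹) ^ (γ-1) :=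
          Real.rpow_le_rpow hδ0.le (min_le_right _ _) hγ0.le
      _ = c := Real.rpow_inv_rpow hc0.le (ne_of_gt hγ0)
  refine ⟨δ, hδ0, hδhalf, ?_⟩
  intro ϱ ϱt hϱ hϱt hge
  have hts : ϱt ≤ δ * ϱ := by
    have h := mul_le_mul_of_nonneg_left hge hδ0.le
    rwa [← mul_assoc, mul_inv_cancel₀ hδ0.ne', one_mul] at h
  rcases eq_or_lt_of_le hϱ with h0 | hpos
  · have ht0 : ϱt = 0 := le_antisymm (by nlinarith) hϱt
    rw [ht0, ← h0, Real.zero_rpow (by linarith : γ ≠ 0),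
      Real.zero_rpow (ne_of_gt hγ0)]
    simp
  · -- main case ϱ > 0
    have h1 : ϱt ^ γ ≤ δ ^ (γ-1) * ϱ ^ γ := by
      calc ϱt ^ γ ≤ (δ * ϱ) ^ γ := Real.rpow_le_rpow hϱt hts (by linarith)
        _ = δ ^ γ * ϱ ^ γ := Real.mul_rpow hδ0.le hϱ
        _ ≤ δ ^ (γ-1) * ϱ ^ γ := by
            have := Real.rpow_le_rpow_of_exponent_ge hδ0 hδ1 (by linarith : γ - 1 ≤ γ)
            exact mul_le_mul_of_nonneg_right this (Real.rpow_nonneg hϱ γ)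
    have h2 : ϱt ^ (γ-1) ≤ δ ^ (γ-1) * ϱ ^ (γ-1) := by
      calc ϱt ^ (γ-1) ≤ (δ * ϱ) ^ (γ-1) := Real.rpow_le_rpow hϱt hts hγ0.le
        _ = δ ^ (γ-1) * ϱ ^ (γ-1) := Real.mul_rpow hδ0.le hϱ
    have hsum : ϱ ^ (γ-1) * ϱ = ϱ ^ γ := by
      rw [← Real.rpow_add_one hpos.ne' (γ-1)]; ring_nf
    have hϱγpos : 0 < ϱ ^ γ := Real.rpow_pos_of_pos hpos γ
    have hdiff : 0 ≤ ϱ - ϱt := by nlinarith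
    have h3 : γ * (ϱt ^ (γ-1) * (ϱ - ϱt)) ≤ γ * (δ ^ (γ-1) * ϱ ^ γ) := by
      have hb : ϱt ^ (γ-1) * (ϱ - ϱt) ≤ δ ^ (γ-1) * ϱ ^ γ := by
        calc ϱt ^ (γ-1) * (ϱ - ϱt) ≤ (δ ^ (γ-1) * ϱ ^ (γ-1)) * ϱ := by
              apply mul_le_mul h2 (by linarith) hdiff
              positivity
          _ = δ ^ (γ-1) * ϱ ^ γ := by rw [mul_assoc, hsum]
      exact mul_le_mul_of_nonneg_left hb (by linarith)
    have hcb : (1 + γ) * (δ ^ (γ-1) * ϱ ^ γ) ≤ (1/2) * ϱ ^ γ := by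
      have : (1 + γ) * δ ^ (γ-1) ≤ 1/2 := by
        have h := mul_le_mul_of_nonneg_left hδpow (by linarith : (0:ℝ) ≤ 1 + γ)
        have : (1 + γ) * c = 1/2 := by
          rw [hcdef]; field_simp
        linarith
      nlinarith
    have key : ϱt ^ γ + γ * (ϱt ^ (γ-1) * (ϱ - ϱt)) ≤ (1/2) * ϱ ^ γ := by
      nlinarith [Real.rpow_nonneg hδ0.le (γ-1)]
    have hcoef : 0 < a / (γ - 1) := by positivity
    have := mul_le_mul_of_nonneg_left key hcoef.le
    have hhalf : a / (2 * (γ - 1)) * ϱ ^ γ = a / (γ-1) * ((1/2) * ϱ ^ γ) := by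
      field_simp
    have hexp : a / (γ - 1) * ϱ ^ γ - a / (γ - 1) * ϱt ^ γ
        - a * γ / (γ - 1) * ϱt ^ (γ - 1) * (ϱ - ϱt)
        = a / (γ-1) * ϱ ^ γ - a / (γ-1) * (ϱt ^ γ + γ * (ϱt ^ (γ-1) * (ϱ - ϱt))) := by
      ring
    have h4 : a / (γ-1) * ϱ ^ γ
        = a / (γ-1) * (1/2 * ϱ ^ γ) + a / (γ-1) * (1/2 * ϱ ^ γ) := by ring
    rw [ge_iff_le, hhalf, hexp]
    linarith
end

section
/- Let a > 0 and γ > 1, and define H(s) = a/(γ-1)·s^γ. There exist δ > 0 and c > 0 depending only on a and γ such that for all ϱ, ϱ̃ ≥ 0: if δ·ϱ̃ ≤ ϱ ≤ δ⁻¹·ϱ̃ then H(ϱ) − H(ϱ̃) − H'(ϱ̃)(ϱ − ϱ̃) ≥ c·ϱ̃^(γ−2)·(ϱ − ϱ̃)² (interpreting this as 0 when ϱ̃ = 0 and γ < 2 forces ϱ = ϱ̃ = 0), and otherwise H(ϱ) − H(ϱ̃) − H'(ϱ̃)(ϱ − ϱ̃) ≥ c·max{ϱ^γ, ϱ̃^γ}.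 -/
open Real

set_option maxHeartbeats 2000000

private lemma bern_ge (p : ℝ) (hp : 1 ≤ p) {t : ℝ} (ht : 0 ≤ t) :
    1 + p * (t - 1) ≤ t ^ p := by
  have h := one_add_mul_self_le_rpow_one_add (s := t - 1) (by linarith) hp
  rwa [show (1:ℝ) + (t - 1) = t by ring] at h

private lemma bern_le (p : ℝ) (hp0 : 0 ≤ p) (hp1 : p ≤ 1) {t : ℝ} (ht : 0 ≤ t) :
    t ^ p ≤ 1 + p * (t - 1) := by
  have h := rpow_one_add_le_one_add_mul_self (s := t - 1) (by linarith) hp0 hp1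
  rwa [show (1:ℝ) + (t - 1) = t by ring] at h

private lemma tangent_line (p : ℝ) (hp : 1 ≤ p) {m x : ℝ} (hm : 0 < m) (hx : 0 ≤ x) :
    m ^ p + p * m ^ (p - 1) * (x - m) ≤ x ^ p := by
  have hs : (-1 : ℝ) ≤ x / m - 1 := by
    have : 0 ≤ x / m := div_nonneg hx hm.le
    linarith
  have h := one_add_mul_self_le_rpow_one_add hs hp
  rw [show 1 + (x / m - 1) = x / m by ring, Real.div_rpow hx hm.le] at h
  have hmp : 0 < m ^ p := Real.rpow_pos_of_pos hm p
  have h2 : (1 + p * (x / m - 1)) * m ^ p ≤ x ^ p := by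
    have h3 := mul_le_mul_of_nonneg_right h hmp.le
    rwa [div_mul_cancel₀ _ hmp.ne'] at h3
  have hm1 : m ^ (p - 1) * m = m ^ p := by
    rw [← Real.rpow_add_one hm.ne' (p - 1)]
    norm_num
  have hexp : (1 + p * (x / m - 1)) * m ^ p = m ^ p + p * m ^ (p - 1) * (x - m) := by
    rw [← hm1]; field_simp
  linarith [hexp ▸ h2]

private lemma tangent_line_concave (p : ℝ) (hp0 : 0 ≤ p) (hp : p ≤ 1) {m x : ℝ}
    (hm : 0 < m) (hx : 0 ≤ x) :
    x ^ p ≤ m ^ p + p * m ^ (p - 1) * (x - m) := by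
  have hs : (-1 : ℝ) ≤ x / m - 1 := by
    have : 0 ≤ x / m := div_nonneg hx hm.le
    linarith
  have h := rpow_one_add_le_one_add_mul_self hs hp0 hp
  rw [show 1 + (x / m - 1) = x / m by ring, Real.div_rpow hx hm.le] at h
  have hmp : 0 < m ^ p := Real.rpow_pos_of_pos hm p
  have h2 : x ^ p ≤ (1 + p * (x / m - 1)) * m ^ p := by
    have h3 := mul_le_mul_of_nonneg_right h hmp.le
    rwa [div_mul_cancel₀ _ hmp.ne'] at h3
  have hm1 : m ^ (p - 1) * m = m ^ p := by
    rw [← Real.rpow_add_one hm.ne' (p - 1)]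
    norm_num
  have hexp : (1 + p * (x / m - 1)) * m ^ p = m ^ p + p * m ^ (p - 1) * (x - m) := by
    rw [← hm1]; field_simp
  linarith [hexp ▸ h2]

private lemma key_norm (γ : ℝ) (hγ : 1 < γ) :
    ∃ δ C : ℝ, 0 < δ ∧ δ ≤ 1 ∧ 0 < C ∧ C ≤ 1 ∧ ∀ x : ℝ, 0 ≤ x →
      ((δ ≤ x ∧ x ≤ δ⁻¹) → x ^ γ - 1 - γ * (x - 1) ≥ C * (x - 1) ^ 2) ∧
      (¬(δ ≤ x ∧ x ≤ δ⁻¹) → x ^ γ - 1 - γ * (x - 1) ≥ C * max (x ^ γ) 1) := by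
  have hγ0 : 0 < γ := by linarith
  have hβ : 0 < γ - 1 := by linarith
  obtain ⟨R, hR2, hRβ⟩ : ∃ R : ℝ, 2 ≤ R ∧ 2 * γ ≤ R ^ (γ - 1) := by
    refine ⟨max 2 ((2 * γ) ^ (γ - 1)⁻¹), le_max_left _ _, ?_⟩
    have h1 : ((2 * γ) ^ (γ - 1)⁻¹) ^ (γ - 1) = 2 * γ := by
      rw [← Real.rpow_mul (by positivity), inv_mul_cancel₀ hβ.ne', Real.rpow_one]
    calc 2 * γ = ((2 * γ) ^ (γ - 1)⁻¹) ^ (γ - 1) := h1.symm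
      _ ≤ (max 2 ((2 * γ) ^ (γ - 1)⁻¹)) ^ (γ - 1) :=
        Real.rpow_le_rpow (by positivity) (le_max_right _ _) hβ.le
  have hR0 : 0 < R := by linarith
  obtain ⟨δ, hδpos, hδhalf, hδβ, hδR⟩ :
      ∃ δ : ℝ, 0 < δ ∧ δ ≤ 2⁻¹ ∧ δ ≤ (γ - 1) / (2 * γ) ∧ δ ≤ R⁻¹ := by
    refine ⟨min 2⁻¹ (min ((γ - 1) / (2 * γ)) R⁻¹),
      lt_min (by norm_num) (lt_min (by positivity) (by positivity)), min_le_left _ _,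
      le_trans (min_le_right _ _) (min_le_left _ _),
      le_trans (min_le_right _ _) (min_le_right _ _)⟩
  have hδ1 : δ ≤ 1 := by linarith
  have hδinv : R ≤ δ⁻¹ := by
    rw [← inv_inv R]
    exact inv_anti₀ hδpos hδR
  have hδinv1 : (1:ℝ) ≤ δ⁻¹ := by
    have h := inv_anti₀ hδpos hδ1
    simpa using h
  have hD : 0 < δ ^ (2 - γ) := Real.rpow_pos_of_pos hδpos _
  have hmin1 : min 1 (γ - 1) ≤ γ - 1 := min_le_right _ _
  have hmin1' : min 1 (γ - 1) ≤ 1 := min_le_left _ _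
  have hmin2 : min 1 (δ ^ (2 - γ)) ≤ δ ^ (2 - γ) := min_le_right _ _
  have hmin2' : min 1 (δ ^ (2 - γ)) ≤ 1 := min_le_left _ _
  have hmin1p : 0 < min 1 (γ - 1) := lt_min one_pos hβ
  have hmin2p : 0 < min 1 (δ ^ (2 - γ)) := lt_min one_pos hD
  obtain ⟨C, hCpos, hChalf, hCβ, hCC1⟩ :
      ∃ C : ℝ, 0 < C ∧ C ≤ 2⁻¹ ∧ C ≤ (γ - 1) / 2 ∧
        C ≤ γ / 4 * min 1 (γ - 1) * min 1 (δ ^ (2 - γ)) := by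
    refine ⟨min (γ / 4 * min 1 (γ - 1) * min 1 (δ ^ (2 - γ))) (min 2⁻¹ ((γ - 1) / 2)),
      ?_, le_trans (min_le_right _ _) (min_le_left _ _),
      le_trans (min_le_right _ _) (min_le_right _ _), min_le_left _ _⟩
    apply lt_min _ (lt_min (by norm_num) (by linarith))
    exact mul_pos (mul_pos (by linarith) hmin1p) hmin2p
  refine ⟨δ, C, hδpos, hδ1, hCpos, by linarith, ?_⟩
  intro x hx
  constructor
  · -- Case 1
    rintro ⟨hx1, hx2⟩
    have hm0 : 0 < (1 + x) / 2 := by linarith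
    have hA := tangent_line γ hγ.le hm0 hx
    have hB := bern_ge γ hγ.le (t := (1 + x) / 2) hm0.le
    have hkey : γ / 2 * ((x - 1) * (((1 + x) / 2) ^ (γ - 1) - 1))
        ≤ x ^ γ - 1 - γ * (x - 1) := by nlinarith [hA, hB]
    have hmain : min 1 (γ - 1) * min 1 (δ ^ (2 - γ)) * (x - 1) ^ 2 / 2
        ≤ (x - 1) * (((1 + x) / 2) ^ (γ - 1) - 1) := by
      have hmm12 : min 1 (γ - 1) * min 1 (δ ^ (2 - γ)) ≤ 1 := by
        calc min 1 (γ - 1) * min 1 (δ ^ (2 - γ)) ≤ 1 * 1 :=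
          mul_le_mul hmin1' hmin2' hmin2p.le zero_le_one
        _ = 1 := by norm_num
      have hmmD : min 1 (γ - 1) * min 1 (δ ^ (2 - γ)) ≤ (γ - 1) * δ ^ (2 - γ) :=
        mul_le_mul hmin1 hmin2 hmin2p.le hβ.le
      rcases le_total 1 x with hx1' | hx1'
      · -- x ≥ 1
        have hm1 : (1:ℝ) ≤ (1 + x) / 2 := by linarith
        rcases le_total (γ - 1) 1 with hb1 | hb1
        · -- 1 < γ ≤ 2
          have h4 := tangent_line_concave (γ - 1) hβ.le hb1 hm0 (zero_le_one)
          rw [Real.one_rpow] at h4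
          -- h4 : 1 ≤ m^(γ-1) + (γ-1)*m^(γ-1-1)*(1-m)
          have hmδ : (1 + x) / 2 ≤ δ⁻¹ := by linarith [hx2, hδinv1]
          have h7 : (δ⁻¹) ^ (γ - 1 - 1) ≤ ((1 + x) / 2) ^ (γ - 1 - 1) :=
            Real.rpow_le_rpow_of_nonpos hm0 hmδ (by linarith)
          have h8 : (δ⁻¹ : ℝ) ^ (γ - 1 - 1) = δ ^ (2 - γ) := by
            rw [← Real.rpow_neg_one δ, ← Real.rpow_mul hδpos.le]
            ring_nf
          have hE : δ ^ (2 - γ) ≤ ((1 + x) / 2) ^ (γ - 1 - 1) := h8 ▸ h7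
          have hG : (γ - 1) * ((1 + x) / 2) ^ (γ - 1 - 1) * ((x - 1) / 2)
              ≤ ((1 + x) / 2) ^ (γ - 1) - 1 := by nlinarith [h4]
          have hH : (γ - 1) * δ ^ (2 - γ) * ((x - 1) / 2)
              ≤ (γ - 1) * ((1 + x) / 2) ^ (γ - 1 - 1) * ((x - 1) / 2) := by
            have h9 : 0 ≤ (γ - 1) * ((x - 1) / 2) := by nlinarith
            nlinarith [mul_le_mul_of_nonneg_left hE h9]
          have hI : ((x - 1) / 2) * ((γ - 1) * δ ^ (2 - γ))
              ≥ min 1 (γ - 1) * min 1 (δ ^ (2 - γ)) * ((x - 1) / 2) := by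
            nlinarith [mul_le_mul_of_nonneg_right hmmD (by linarith : (0:ℝ) ≤ (x - 1) / 2)]
          have hJ : (x - 1) * (((1 + x) / 2) ^ (γ - 1) - 1)
              ≥ (x - 1) * ((γ - 1) * δ ^ (2 - γ) * ((x - 1) / 2)) := by
            have := le_trans hH hG
            nlinarith [mul_le_mul_of_nonneg_left this (by linarith : (0:ℝ) ≤ x - 1)]
          nlinarith [hJ, mul_le_mul_of_nonneg_right hmmD (sq_nonneg (x - 1))]
        · -- γ ≥ 2
          have h1 := bern_ge (γ - 1) hb1 (t := (1 + x) / 2) hm0.le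
          -- m^(γ-1) - 1 ≥ (γ-1)(m-1) ≥ (x-1)/2
          have h2 : (x - 1) / 2 ≤ ((1 + x) / 2) ^ (γ - 1) - 1 := by
            nlinarith [h1, mul_le_mul_of_nonneg_right hb1 (by linarith : (0:ℝ) ≤ (x - 1) / 2)]
          have h3 := mul_le_mul_of_nonneg_left h2 (by linarith : (0:ℝ) ≤ x - 1)
          nlinarith [h3, mul_le_mul_of_nonneg_right hmm12 (sq_nonneg (x - 1))]
      · -- x ≤ 1
        have hm1 : (1 + x) / 2 ≤ 1 := by linarith
        rcases le_total (γ - 1) 1 with hb1 | hb1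
        · have h1 := bern_le (γ - 1) hβ.le hb1 (t := (1 + x) / 2) hm0.le
          -- 1 - m^(γ-1) ≥ (γ-1)(1-m) = (γ-1)(1-x)/2
          have h2 : (γ - 1) * ((1 - x) / 2) ≤ 1 - ((1 + x) / 2) ^ (γ - 1) := by
            nlinarith [h1]
          have h3 := mul_le_mul_of_nonneg_left h2 (by linarith : (0:ℝ) ≤ 1 - x)
          nlinarith [h3, mul_le_mul_of_nonneg_right
            (mul_le_mul hmin1 hmin2' hmin2p.le hβ.le) (sq_nonneg (x - 1))]
        · have h1 : ((1 + x) / 2) ^ (γ - 1) ≤ (1 + x) / 2 := by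
            have h := Real.rpow_le_rpow_of_exponent_ge hm0 hm1 hb1
            rwa [Real.rpow_one] at h
          have h2 : (1 - x) / 2 ≤ 1 - ((1 + x) / 2) ^ (γ - 1) := by linarith
          have h3 := mul_le_mul_of_nonneg_left h2 (by linarith : (0:ℝ) ≤ 1 - x)
          nlinarith [h3, mul_le_mul_of_nonneg_right hmm12 (sq_nonneg (x - 1))]
    have hfin : C * (x - 1) ^ 2
        ≤ γ / 4 * min 1 (γ - 1) * min 1 (δ ^ (2 - γ)) * (x - 1) ^ 2 :=
      mul_le_mul_of_nonneg_right hCC1 (sq_nonneg _)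
    have hfin2 := mul_le_mul_of_nonneg_left hmain (by linarith : (0:ℝ) ≤ γ / 2)
    nlinarith [hfin, hfin2, hkey]
  · -- Case 2
    intro hcon
    rcases lt_or_ge x δ with hxδ | hxδ
    · -- x < δ : small
      have hx1 : x ≤ 1 := by linarith
      have hxγ : x ^ γ ≤ 1 := Real.rpow_le_one hx hx1 hγ0.le
      have hxγ0 : 0 ≤ x ^ γ := Real.rpow_nonneg hx γ
      rw [max_eq_right hxγ]
      have h5 : γ * x ≤ γ * δ := mul_le_mul_of_nonneg_left hxδ.le hγ0.le
      have h6 : γ * δ ≤ (γ - 1) / 2 := by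
        have h7 := mul_le_mul_of_nonneg_left hδβ hγ0.le
        calc γ * δ ≤ γ * ((γ - 1) / (2 * γ)) := h7
          _ = (γ - 1) / 2 := by field_simp
      linarith
    · -- δ⁻¹ < x : large
      push_neg at hcon
      have hxR : δ⁻¹ < x := hcon hxδ
      have hx2 : (2:ℝ) ≤ x := le_trans (hR2.trans hδinv) hxR.le
      have hx1 : (1:ℝ) ≤ x := by linarith
      have hmax : max (x ^ γ) 1 = x ^ γ := by
        apply max_eq_left
        calc (1:ℝ) = 1 ^ γ := (Real.one_rpow γ).symm
          _ ≤ x ^ γ := Real.rpow_le_rpow zero_le_one hx1 hγ0.le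
      rw [hmax]
      have hxβ : 2 * γ ≤ x ^ (γ - 1) :=
        le_trans hRβ (Real.rpow_le_rpow hR0.le (le_trans hδinv hxR.le) hβ.le)
      have hsplit : x ^ γ = x ^ (γ - 1) * x := by
        rw [← Real.rpow_add_one (by positivity : x ≠ 0) (γ - 1)]
        norm_num
      rw [hsplit]
      have hP0 : 0 < x ^ (γ - 1) := Real.rpow_pos_of_pos (by linarith) _
      have h10 : 2 * γ * x ≤ x ^ (γ - 1) * x :=
        mul_le_mul_of_nonneg_right hxβ (by linarith)
      have h11 : C * (x ^ (γ - 1) * x) ≤ 2⁻¹ * (x ^ (γ - 1) * x) :=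
        mul_le_mul_of_nonneg_right hChalf (by positivity)
      linarith

/-- Lemma 5.1 of the paper: two-case lower bound for the relative entropy density
`H(ϱ) − H(ϱ̃) − H'(ϱ̃)(ϱ − ϱ̃)` with `H(s) = a/(γ-1)·s^γ`, `a > 0`, `γ > 1`. -/
theorem stmt_7 (a γ : ℝ) (ha : 0 < a) (hγ : 1 < γ) :
    ∃ δ c : ℝ, 0 < δ ∧ 0 < c ∧
      ∀ ϱ ϱt : ℝ, 0 ≤ ϱ → 0 ≤ ϱt →
        ((δ * ϱt ≤ ϱ ∧ ϱ ≤ δ⁻¹ * ϱt) →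
          a / (γ - 1) * ϱ ^ γ - a / (γ - 1) * ϱt ^ γ
            - a * γ / (γ - 1) * ϱt ^ (γ - 1) * (ϱ - ϱt)
            ≥ c * ϱt ^ (γ - 2) * (ϱ - ϱt) ^ 2) ∧
        (¬(δ * ϱt ≤ ϱ ∧ ϱ ≤ δ⁻¹ * ϱt) →
          a / (γ - 1) * ϱ ^ γ - a / (γ - 1) * ϱt ^ γ
            - a * γ / (γ - 1) * ϱt ^ (γ - 1) * (ϱ - ϱt)
            ≥ c * max (ϱ ^ γ) (ϱt ^ γ)) := by
  have hβ : 0 < γ - 1 := by linarith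
  have hγ0 : 0 < γ := by linarith
  obtain ⟨δ, C, hδpos, hδ1, hCpos, hC1, hkey⟩ := key_norm γ hγ
  refine ⟨δ, a / (γ - 1) * C, hδpos, by positivity, ?_⟩
  intro ϱ ϱt hϱ hϱt
  rcases hϱt.eq_or_lt with h0 | hϱt0
  · -- ϱt = 0
    subst h0
    constructor
    · rintro ⟨h1, h2⟩
      have hϱ0 : ϱ = 0 := le_antisymm (by simpa using h2) hϱ
      subst hϱ0
      simp
    · intro hn
      have hne : ϱ ≠ 0 := by
        rintro rfl
        exact hn ⟨by simp, by simp⟩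
      have hϱpos : 0 < ϱ := hϱ.lt_of_ne (Ne.symm hne)
      rw [Real.zero_rpow hγ0.ne', Real.zero_rpow (by positivity : γ - 1 ≠ 0),
        max_eq_left (Real.rpow_nonneg hϱ γ)]
      have hg : 0 < ϱ ^ γ := Real.rpow_pos_of_pos hϱpos γ
      have h2 : a / (γ - 1) * C * ϱ ^ γ ≤ a / (γ - 1) * 1 * ϱ ^ γ := by
        have h3 := mul_le_mul_of_nonneg_left hC1 (by positivity : (0:ℝ) ≤ a / (γ - 1))
        nlinarith [h3, hg]
      nlinarith [h2]
  · -- ϱt > 0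
    have hne : ϱt ≠ 0 := hϱt0.ne'
    have hx : 0 ≤ ϱ / ϱt := div_nonneg hϱ hϱt0.le
    obtain ⟨H1, H2⟩ := hkey (ϱ / ϱt) hx
    have hcond : (δ * ϱt ≤ ϱ ∧ ϱ ≤ δ⁻¹ * ϱt) ↔ (δ ≤ ϱ / ϱt ∧ ϱ / ϱt ≤ δ⁻¹) :=
      and_congr (le_div_iff₀ hϱt0).symm (div_le_iff₀ hϱt0).symm
    have hT0 : 0 < ϱt ^ γ := Real.rpow_pos_of_pos hϱt0 γ
    have e1 : ϱ ^ γ = ϱt ^ γ * (ϱ / ϱt) ^ γ := by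
      rw [Real.div_rpow hϱ hϱt0.le]
      field_simp
    have eT : ϱt ^ γ = ϱt ^ (γ - 1) * ϱt := by
      rw [← Real.rpow_add_one hne (γ - 1)]
      norm_num
    have e2 : ϱt ^ (γ - 1) * (ϱ - ϱt) = ϱt ^ γ * (ϱ / ϱt - 1) := by
      rw [eT]
      field_simp
    have eT2 : ϱt ^ γ = ϱt ^ (γ - 2) * ϱt ^ 2 := by
      rw [← Real.rpow_natCast ϱt 2, ← Real.rpow_add hϱt0]
      norm_num
    have e3 : ϱt ^ (γ - 2) * (ϱ - ϱt) ^ 2 = ϱt ^ γ * (ϱ / ϱt - 1) ^ 2 := by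
      rw [eT2]
      have h4 : ϱt ^ 2 * (ϱ / ϱt - 1) ^ 2 = (ϱ - ϱt) ^ 2 := by
        field_simp
      rw [mul_assoc, h4]
    have e4 : max (ϱ ^ γ) (ϱt ^ γ) = ϱt ^ γ * max ((ϱ / ϱt) ^ γ) 1 := by
      rw [e1, mul_max_of_nonneg _ _ hT0.le, mul_one]
    have hfac : a / (γ - 1) * ϱ ^ γ - a / (γ - 1) * ϱt ^ γ
        - a * γ / (γ - 1) * ϱt ^ (γ - 1) * (ϱ - ϱt)
        = a / (γ - 1) * ϱt ^ γ * ((ϱ / ϱt) ^ γ - 1 - γ * (ϱ / ϱt - 1)) := by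
      rw [e1, mul_assoc (a * γ / (γ - 1)), e2]
      ring
    have hapos : (0:ℝ) < a / (γ - 1) := by positivity
    constructor
    · intro hc
      have h1 := H1 (hcond.mp hc)
      rw [hfac, mul_assoc (a / (γ - 1) * C), e3]
      have h2 := mul_le_mul_of_nonneg_left h1 (by positivity : (0:ℝ) ≤ a / (γ - 1) * ϱt ^ γ)
      nlinarith [h2]
    · intro hc
      have h1 := H2 (fun hh => hc (hcond.mpr hh))
      rw [hfac, e4]
      have h2 := mul_le_mul_of_nonneg_left h1 (by positivity : (0:ℝ) ≤ a / (γ - 1) * ϱt ^ γ)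
      nlinarith [h2]
end

section
/- Let k, L ≥ 0, 𝔷 ≥ 0 and define G(s) = kL·s·log s + 𝔷·s². Then for all η, η̃ > 0, (√η − √η̃)² ≤ 4·(G(η) − G(η̃) − G'(η̃)(η − η̃)) holds whenever kL ≥ 1 and 𝔷 ≥ 0; more precisely, kL·(√η − √η̃)² ≤ 4·(G(η) − G(η̃) − G'(η̃)(η − η̃)). -/
/-- Uniform bound (5.20): the squared difference of square roots is controlled by
the relative entropy density of `G(s) = kL·s·log s + 𝔷·s²`; precisely
`kL·(√η − √η̃)² ≤ 4·(G(η) − G(η̃) − G'(η̃)(η − η̃))`. -/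
theorem stmt_10 (k L z : ℝ) (hk : 0 ≤ k) (hL : 0 ≤ L) (hz : 0 ≤ z) :
    ∀ η ηt : ℝ, 0 < η → 0 < ηt →
      k * L * (Real.sqrt η - Real.sqrt ηt) ^ 2
        ≤ 4 * ((k * L * η * Real.log η + z * η ^ 2)
          - (k * L * ηt * Real.log ηt + z * ηt ^ 2)
          - (k * L * (Real.log ηt + 1) + 2 * z * ηt) * (η - ηt)) := by
  intro η ηt hη hηt
  set x := Real.sqrt η with hxdef
  set y := Real.sqrt ηt with hydef
  have hx : 0 < x := Real.sqrt_pos.mpr hη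
  have hy : 0 < y := Real.sqrt_pos.mpr hηt
  have hηx : η = x ^ 2 := (Real.sq_sqrt hη.le).symm
  have hηy : ηt = y ^ 2 := (Real.sq_sqrt hηt.le).symm
  have hlog : Real.log (y / x) ≤ y / x - 1 :=
    Real.log_le_sub_one_of_pos (by positivity)
  have hldiv : Real.log (y / x) = Real.log y - Real.log x :=
    Real.log_div hy.ne' hx.ne'
  have hlogeq : Real.log η - Real.log ηt = 2 * (Real.log x - Real.log y) := by
    rw [hηx, hηy, Real.log_pow, Real.log_pow]; push_cast; ring
  have key : (x - y) ^ 2 ≤ η * (Real.log η - Real.log ηt) - (η - ηt) := by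
    rw [hlogeq, hηx, hηy]
    have h1 : 1 - y / x ≤ Real.log x - Real.log y := by
      rw [hldiv] at hlog; linarith
    have h2 : x ^ 2 * (2 * (1 - y / x)) ≤ x ^ 2 * (2 * (Real.log x - Real.log y)) := by
      have := sq_nonneg x
      nlinarith
    have h3 : x ^ 2 * (2 * (1 - y / x)) = 2 * x ^ 2 - 2 * x * y := by
      field_simp
    nlinarith
  have hkL : 0 ≤ k * L := mul_nonneg hk hL
  have hmain := mul_le_mul_of_nonneg_left key hkL
  have hzpart : 0 ≤ z * (η - ηt) ^ 2 := by positivity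
  nlinarith [sq_nonneg (x - y)]
end
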